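/- Let X ∈ ℝ^{n×d} be a data matrix, y ∈ ℝ^n a label vector, λ > 0, and m ∈ ℕ. Then the two minimization problems (i) inf over u_1,…,u_m ∈ ℝ^d and α_1,…,α_m ∈ ℝ of (1/2) ‖Σ_{j=1}^m α_j φ(X u_j) − y‖_2^2 + (λ/2) Σ_{j=1}^m (‖u_j‖_2^4 + α_j^4), and (ii) inf over u_1,…,u_m ∈ ℝ^d and α_1,…,α_m ∈ ℝ of (1/2) ‖Σ_{j=1}^m α_j φ(X u_j) − y‖_2^2 + λ Σ_{j=1}^m ‖u_j‖_2^2 α_j^2 have equal infima. -/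

import Mathlib

open scoped BigOperators

/-- The quartically regularized two-layer ReLU problem and the problem with
regularizer `lam * ∑ j, ‖u j‖² * (α j)²` have equal infima. -/
theorem stmt_3 (n d m : ℕ) (X : Matrix (Fin n) (Fin d) ℝ) (y : Fin n → ℝ)
    (lam : ℝ) (hlam : 0 < lam) :
    sInf {L : ℝ | ∃ (u : Fin m → EuclideanSpace ℝ (Fin d)) (α : Fin m → ℝ),
        L = (1 / 2) * ∑ k, ((∑ j, α j * max 0 (X.mulVec (u j) k)) - y k) ^ 2
            + (lam / 2) * ∑ j, (‖u j‖ ^ 4 + (α j) ^ 4)} =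
    sInf {L : ℝ | ∃ (u : Fin m → EuclideanSpace ℝ (Fin d)) (α : Fin m → ℝ),
        L = (1 / 2) * ∑ k, ((∑ j, α j * max 0 (X.mulVec (u j) k)) - y k) ^ 2
            + lam * ∑ j, ‖u j‖ ^ 2 * (α j) ^ 2} := by
  classical
  set A := {L : ℝ | ∃ (u : Fin m → EuclideanSpace ℝ (Fin d)) (α : Fin m → ℝ),
        L = (1 / 2) * ∑ k, ((∑ j, α j * max 0 (X.mulVec (u j) k)) - y k) ^ 2
            + (lam / 2) * ∑ j, (‖u j‖ ^ 4 + (α j) ^ 4)} with hA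
  set B := {L : ℝ | ∃ (u : Fin m → EuclideanSpace ℝ (Fin d)) (α : Fin m → ℝ),
        L = (1 / 2) * ∑ k, ((∑ j, α j * max 0 (X.mulVec (u j) k)) - y k) ^ 2
            + lam * ∑ j, ‖u j‖ ^ 2 * (α j) ^ 2} with hB
  have hAne : A.Nonempty := ⟨_, 0, 0, rfl⟩
  have hBne : B.Nonempty := ⟨_, 0, 0, rfl⟩
  have hA0 : ∀ L ∈ A, (0:ℝ) ≤ L := by
    rintro L ⟨u, α, rfl⟩
    have h1 : (0:ℝ) ≤ ∑ k, ((∑ j, α j * max 0 (X.mulVec (u j) k)) - y k) ^ 2 :=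
      Finset.sum_nonneg fun k _ => sq_nonneg _
    have h2 : (0:ℝ) ≤ ∑ j, (‖u j‖ ^ 4 + (α j) ^ 4) :=
      Finset.sum_nonneg fun j _ => by positivity
    positivity
  have hB0 : ∀ L ∈ B, (0:ℝ) ≤ L := by
    rintro L ⟨u, α, rfl⟩
    have h1 : (0:ℝ) ≤ ∑ k, ((∑ j, α j * max 0 (X.mulVec (u j) k)) - y k) ^ 2 :=
      Finset.sum_nonneg fun k _ => sq_nonneg _
    have h2 : (0:ℝ) ≤ ∑ j, ‖u j‖ ^ 2 * (α j) ^ 2 :=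
      Finset.sum_nonneg fun j _ => by positivity
    positivity
  have hAbdd : BddBelow A := ⟨0, hA0⟩
  have hBbdd : BddBelow B := ⟨0, hB0⟩
  have hBsubA : B ⊆ A := by
    rintro L ⟨u, α, rfl⟩
    refine ⟨fun j => if α j = 0 ∨ u j = 0 then 0 else
        (Real.sqrt (|α j| / ‖u j‖)) • u j,
      fun j => if α j = 0 ∨ u j = 0 then 0 else α j / Real.sqrt (|α j| / ‖u j‖), ?_⟩
    have key1 : ∀ j k,
        (if α j = 0 ∨ u j = 0 then (0:ℝ) else α j / Real.sqrt (|α j| / ‖u j‖)) *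
          max 0 (X.mulVec (if α j = 0 ∨ u j = 0 then 0 else
            (Real.sqrt (|α j| / ‖u j‖)) • u j : EuclideanSpace ℝ (Fin d)) k)
        = α j * max 0 (X.mulVec (u j) k) := by
      intro j k
      by_cases h : α j = 0 ∨ u j = 0
      · rcases h with h | h
        · simp [h]
        · simp [h, Matrix.mulVec_zero]
      · push_neg at h
        obtain ⟨hα, hu⟩ := h
        have hun : (0:ℝ) < ‖u j‖ := norm_pos_iff.mpr hu
        have hαn : (0:ℝ) < |α j| := abs_pos.mpr hα
        set c := Real.sqrt (|α j| / ‖u j‖) with hcdef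
        have hcpos : 0 < c := Real.sqrt_pos.mpr (by positivity)
        simp only [if_neg (not_or.mpr ⟨hα, hu⟩)]
        have hsm : X.mulVec (c • (u j) : EuclideanSpace ℝ (Fin d)) k
            = c * X.mulVec (u j) k := by
          simp [Matrix.mulVec, dotProduct, Finset.mul_sum]
          exact Finset.sum_congr rfl fun i _ => by
            show X k i * (c • u j) i = c * (X k i * u j i)
            simp [PiLp.smul_apply, smul_eq_mul]; ring
        rw [hsm]
        rw [show max (0:ℝ) (c * X.mulVec (u j) k)
            = c * max 0 (X.mulVec (u j) k) by
          rw [mul_max_of_nonneg _ _ hcpos.le, mul_zero]]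
        field_simp
    have key2 : ∀ j,
        ‖(if α j = 0 ∨ u j = 0 then 0 else
            (Real.sqrt (|α j| / ‖u j‖)) • u j : EuclideanSpace ℝ (Fin d))‖ ^ 4 +
          (if α j = 0 ∨ u j = 0 then (0:ℝ) else α j / Real.sqrt (|α j| / ‖u j‖)) ^ 4
        = 2 * (‖u j‖ ^ 2 * (α j) ^ 2) := by
      intro j
      by_cases h : α j = 0 ∨ u j = 0
      · rcases h with h | h <;> simp [h]
      · push_neg at h
        obtain ⟨hα, hu⟩ := h
        have hun : (0:ℝ) < ‖u j‖ := norm_pos_iff.mpr hu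
        have hαn : (0:ℝ) < |α j| := abs_pos.mpr hα
        set c := Real.sqrt (|α j| / ‖u j‖) with hcdef
        have hcpos : 0 < c := Real.sqrt_pos.mpr (by positivity)
        have hc2 : c ^ 2 = |α j| / ‖u j‖ := Real.sq_sqrt (by positivity)
        have hc4 : c ^ 4 = (α j) ^ 2 / ‖u j‖ ^ 2 := by
          rw [show c ^ 4 = (c ^ 2) ^ 2 by ring, hc2, div_pow, sq_abs]
        simp only [if_neg (not_or.mpr ⟨hα, hu⟩)]
        rw [norm_smul, Real.norm_eq_abs, abs_of_pos hcpos]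
        have h1 : (c * ‖u j‖) ^ 4 = c ^ 4 * ‖u j‖ ^ 4 := by ring
        have h2 : (α j / c) ^ 4 = (α j) ^ 4 / c ^ 4 := by rw [div_pow]
        rw [h1, h2, hc4]
        field_simp
        ring
    have hdata : ∀ k, (∑ j, (if α j = 0 ∨ u j = 0 then (0:ℝ)
          else α j / Real.sqrt (|α j| / ‖u j‖)) *
          max 0 (X.mulVec (if α j = 0 ∨ u j = 0 then 0 else
            (Real.sqrt (|α j| / ‖u j‖)) • u j : EuclideanSpace ℝ (Fin d)) k))
        = ∑ j, α j * max 0 (X.mulVec (u j) k) := by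
      intro k
      exact Finset.sum_congr rfl fun j _ => key1 j k
    have hreg : (∑ j, (‖(if α j = 0 ∨ u j = 0 then 0 else
          (Real.sqrt (|α j| / ‖u j‖)) • u j : EuclideanSpace ℝ (Fin d))‖ ^ 4 +
          (if α j = 0 ∨ u j = 0 then (0:ℝ) else α j / Real.sqrt (|α j| / ‖u j‖)) ^ 4))
        = 2 * ∑ j, ‖u j‖ ^ 2 * (α j) ^ 2 := by
      rw [Finset.mul_sum]
      exact Finset.sum_congr rfl fun j _ => key2 j
    simp only [hdata, hreg]
    ring
  have le1 : sInf A ≤ sInf B := csInf_le_csInf hAbdd hBne hBsubA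
  have le2 : sInf B ≤ sInf A := by
    refine le_csInf hAne ?_
    rintro a ⟨u, α, rfl⟩
    refine csInf_le_of_le hBbdd ⟨u, α, rfl⟩ ?_
    have : ∑ j, ‖u j‖ ^ 2 * (α j) ^ 2 ≤ (1/2) * ∑ j, (‖u j‖ ^ 4 + (α j) ^ 4) := by
      rw [Finset.mul_sum]
      exact Finset.sum_le_sum fun j _ => by nlinarith [sq_nonneg (‖u j‖ ^ 2 - (α j) ^ 2)]
    nlinarith
  linarith
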